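/- Suppose rank-one orthogonal projections P, Q, R on ℂ² satisfy αP + βQ + δR = γ·I₂ for positive reals α, β, δ, γ and have no common nontrivial invariant subspace. Then the strict triangle inequalities δ + β > α, α + β > δ, δ + α > β hold. -/

import Mathlib

open Matrix

noncomputable def n2 (w : Fin 2 → ℂ) : ℝ := ∑ i, Complex.normSq (w i)

lemma n2_nonneg (w : Fin 2 → ℂ) : 0 ≤ n2 w :=
  Finset.sum_nonneg fun i _ => Complex.normSq_nonneg _

lemma n2_eq_zero {w : Fin 2 → ℂ} (h : n2 w = 0) : w = 0 := by
  funext i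
  have := (Finset.sum_eq_zero_iff_of_nonneg (fun i _ => Complex.normSq_nonneg (w i))).mp h i
    (Finset.mem_univ i)
  simpa using Complex.normSq_eq_zero.mp this

lemma star_dot_self (w : Fin 2 → ℂ) : star w ⬝ᵥ w = (n2 w : ℂ) := by
  simp [dotProduct, n2, Complex.normSq_eq_conj_mul_self]

lemma n2_pos {w : Fin 2 → ℂ} (h : w ≠ 0) : 0 < n2 w := by
  rcases lt_or_eq_of_le (n2_nonneg w) with h' | h'
  · exact h'
  · exact absurd (n2_eq_zero h'.symm) h

lemma quad (Q : Matrix (Fin 2) (Fin 2) ℂ) (hQ : Q.IsHermitian) (hQ2 : Q * Q = Q)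
    (v : Fin 2 → ℂ) : star v ⬝ᵥ (Q *ᵥ v) = (n2 (Q *ᵥ v) : ℂ) := by
  rw [← star_dot_self, star_mulVec, hQ.eq, ← dotProduct_mulVec, mulVec_mulVec, hQ2]

lemma span_not_inv {P Q R : Matrix (Fin 2) (Fin 2) ℂ}
    (hirr : ∀ W : Submodule ℂ (Fin 2 → ℂ),
      (∀ x ∈ W, P.mulVec x ∈ W) → (∀ x ∈ W, Q.mulVec x ∈ W) →
      (∀ x ∈ W, R.mulVec x ∈ W) → W = ⊥ ∨ W = ⊤)
    {v : Fin 2 → ℂ} (hv : v ≠ 0)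
    (hPv : P *ᵥ v ∈ (ℂ ∙ v)) (hQv : Q *ᵥ v ∈ (ℂ ∙ v)) (hRv : R *ᵥ v ∈ (ℂ ∙ v)) :
    False := by
  have inv : ∀ (M : Matrix (Fin 2) (Fin 2) ℂ), M *ᵥ v ∈ (ℂ ∙ v) →
      ∀ x ∈ (ℂ ∙ v), M *ᵥ x ∈ (ℂ ∙ v) := by
    intro M hM x hx
    obtain ⟨c, rfl⟩ := Submodule.mem_span_singleton.mp hx
    rw [mulVec_smul]
    exact Submodule.smul_mem _ _ hM
  rcases hirr (ℂ ∙ v) (inv P hPv) (inv Q hQv) (inv R hRv) with h | h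
  · exact hv (by simpa [h] using Submodule.mem_span_singleton_self (R := ℂ) v)
  · have h1 : Module.finrank ℂ (ℂ ∙ v : Submodule ℂ (Fin 2 → ℂ)) = 1 :=
      finrank_span_singleton (K := ℂ) hv
    rw [h] at h1
    simp [finrank_top] at h1

lemma dot_eq {P Q R : Matrix (Fin 2) (Fin 2) ℂ} {α β δ γ : ℝ}
    (heq : (α : ℂ) • P + (β : ℂ) • Q + (δ : ℂ) • R = (γ : ℂ) • (1 : Matrix (Fin 2) (Fin 2) ℂ))
    (v : Fin 2 → ℂ) :
    (α : ℂ) * (star v ⬝ᵥ (P *ᵥ v)) + (β : ℂ) * (star v ⬝ᵥ (Q *ᵥ v))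
      + (δ : ℂ) * (star v ⬝ᵥ (R *ᵥ v)) = (γ : ℂ) * (star v ⬝ᵥ v) := by
  have h := congrArg (fun M : Matrix (Fin 2) (Fin 2) ℂ => star v ⬝ᵥ (M *ᵥ v)) heq
  simp [add_mulVec, smul_mulVec, one_mulVec, dotProduct_add, dotProduct_smul,
    smul_eq_mul, mul_add] at h ⊢
  linear_combination h

lemma lower {P Q R : Matrix (Fin 2) (Fin 2) ℂ}
    (hQ : Q.IsHermitian) (hQ2 : Q * Q = Q) (hR : R.IsHermitian) (hR2 : R * R = R)
    {α β δ γ : ℝ} (hβ : 0 < β) (hδ : 0 < δ)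
    (heq : (α : ℂ) • P + (β : ℂ) • Q + (δ : ℂ) • R = (γ : ℂ) • (1 : Matrix (Fin 2) (Fin 2) ℂ))
    (hirr : ∀ W : Submodule ℂ (Fin 2 → ℂ),
      (∀ x ∈ W, P.mulVec x ∈ W) → (∀ x ∈ W, Q.mulVec x ∈ W) →
      (∀ x ∈ W, R.mulVec x ∈ W) → W = ⊥ ∨ W = ⊤)
    {v : Fin 2 → ℂ} (hv : v ≠ 0) (hPv : P *ᵥ v = v) : α < γ := by
  by_contra hle
  push_neg at hle
  have h := dot_eq heq v
  rw [hPv, star_dot_self, quad Q hQ hQ2 v, quad R hR hR2 v] at h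
  have hre : α * n2 v + β * n2 (Q *ᵥ v) + δ * n2 (R *ᵥ v) = γ * n2 v := by
    exact_mod_cast h
  have hA := n2_pos hv
  have hq0 := n2_nonneg (Q *ᵥ v)
  have hr0 := n2_nonneg (R *ᵥ v)
  have hmul : γ * n2 v ≤ α * n2 v := mul_le_mul_of_nonneg_right hle hA.le
  have hqz : n2 (Q *ᵥ v) = 0 := by nlinarith
  have hrz : n2 (R *ᵥ v) = 0 := by nlinarith
  exact span_not_inv hirr hv
    (by rw [hPv]; exact Submodule.mem_span_singleton_self (R := ℂ) v)
    (by rw [n2_eq_zero hqz]; exact Submodule.zero_mem _)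
    (by rw [n2_eq_zero hrz]; exact Submodule.zero_mem _)

lemma compl_herm_idem {Q : Matrix (Fin 2) (Fin 2) ℂ} (hQ : Q.IsHermitian) (hQ2 : Q * Q = Q) :
    (1 - Q).IsHermitian ∧ (1 - Q) * (1 - Q) = 1 - Q :=
  ⟨(Matrix.isHermitian_one).sub hQ,
   by rw [sub_mul, one_mul, mul_sub, mul_one, hQ2]; abel⟩

lemma upper {P Q R : Matrix (Fin 2) (Fin 2) ℂ}
    (hQ : Q.IsHermitian) (hQ2 : Q * Q = Q) (hR : R.IsHermitian) (hR2 : R * R = R)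
    {α β δ γ : ℝ} (hβ : 0 < β) (hδ : 0 < δ)
    (heq : (α : ℂ) • P + (β : ℂ) • Q + (δ : ℂ) • R = (γ : ℂ) • (1 : Matrix (Fin 2) (Fin 2) ℂ))
    (hirr : ∀ W : Submodule ℂ (Fin 2 → ℂ),
      (∀ x ∈ W, P.mulVec x ∈ W) → (∀ x ∈ W, Q.mulVec x ∈ W) →
      (∀ x ∈ W, R.mulVec x ∈ W) → W = ⊥ ∨ W = ⊤)
    {v : Fin 2 → ℂ} (hv : v ≠ 0) (hPv : P *ᵥ v = 0) : γ < β + δ := by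
  by_contra hle
  push_neg at hle
  have h := dot_eq heq v
  rw [hPv, star_dot_self, quad Q hQ hQ2 v, quad R hR hR2 v] at h
  simp only [dotProduct_zero, mul_zero, zero_add] at h
  have hre : β * n2 (Q *ᵥ v) + δ * n2 (R *ᵥ v) = γ * n2 v := by
    exact_mod_cast h
  -- complement bounds
  have hcq : n2 v - n2 (Q *ᵥ v) = n2 (v - Q *ᵥ v) := by
    have h1 := quad (1 - Q) (compl_herm_idem hQ hQ2).1 (compl_herm_idem hQ hQ2).2 v
    rw [Matrix.sub_mulVec, dotProduct_sub, one_mulVec, star_dot_self,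
      quad Q hQ hQ2 v] at h1
    exact_mod_cast h1
  have hcr : n2 v - n2 (R *ᵥ v) = n2 (v - R *ᵥ v) := by
    have h1 := quad (1 - R) (compl_herm_idem hR hR2).1 (compl_herm_idem hR hR2).2 v
    rw [Matrix.sub_mulVec, dotProduct_sub, one_mulVec, star_dot_self,
      quad R hR hR2 v] at h1
    exact_mod_cast h1
  have hA := n2_pos hv
  have hq1 := n2_nonneg (v - Q *ᵥ v)
  have hr1 := n2_nonneg (v - R *ᵥ v)
  have hmul : (β + δ) * n2 v ≤ γ * n2 v := mul_le_mul_of_nonneg_right hle hA.le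
  have hqz : n2 (v - Q *ᵥ v) = 0 := by nlinarith
  have hrz : n2 (v - R *ᵥ v) = 0 := by nlinarith
  have hQv : Q *ᵥ v = v := ((sub_eq_zero.mp (n2_eq_zero hqz))).symm
  have hRv : R *ᵥ v = v := ((sub_eq_zero.mp (n2_eq_zero hrz))).symm
  exact span_not_inv hirr hv
    (by rw [hPv]; exact Submodule.zero_mem _)
    (by rw [hQv]; exact Submodule.mem_span_singleton_self (R := ℂ) v)
    (by rw [hRv]; exact Submodule.mem_span_singleton_self (R := ℂ) v)

lemma aux (P Q R : Matrix (Fin 2) (Fin 2) ℂ)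
    (hP : P.IsHermitian) (hP2 : P * P = P) (hPr : P.rank = 1)
    (hQ : Q.IsHermitian) (hQ2 : Q * Q = Q)
    (hR : R.IsHermitian) (hR2 : R * R = R)
    (α β δ γ : ℝ) (hβ : 0 < β) (hδ : 0 < δ)
    (heq : (α : ℂ) • P + (β : ℂ) • Q + (δ : ℂ) • R = (γ : ℂ) • (1 : Matrix (Fin 2) (Fin 2) ℂ))
    (hirr : ∀ W : Submodule ℂ (Fin 2 → ℂ),
      (∀ x ∈ W, P.mulVec x ∈ W) → (∀ x ∈ W, Q.mulVec x ∈ W) →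
      (∀ x ∈ W, R.mulVec x ∈ W) → W = ⊥ ∨ W = ⊤) :
    β + δ > α := by
  -- find a vector fixed by P
  obtain ⟨i0, j0, hij⟩ : ∃ i j, P i j ≠ 0 := by
    by_contra hc
    push_neg at hc
    have : P = 0 := Matrix.ext fun i j => hc i j
    rw [this, Matrix.rank_zero] at hPr
    omega
  have hv₁ : P *ᵥ Pi.single j0 1 ≠ 0 := by
    intro h
    have := congrFun h i0
    simp at this
    exact hij this
  have hPv₁ : P *ᵥ (P *ᵥ Pi.single j0 1) = P *ᵥ Pi.single j0 1 := by
    rw [mulVec_mulVec, hP2]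
  have h1 : α < γ := lower hQ hQ2 hR hR2 hβ hδ heq hirr hv₁ hPv₁
  -- find a vector killed by P
  have hdet : P.det = 0 := by
    by_contra hd
    have hu : IsUnit P := (Matrix.isUnit_iff_isUnit_det P).mpr (isUnit_iff_ne_zero.mpr hd)
    have := Matrix.rank_of_isUnit P hu
    rw [hPr] at this
    simp [Fintype.card_fin] at this
  obtain ⟨v₂, hv₂, hPv₂⟩ := (Matrix.exists_mulVec_eq_zero_iff).mpr hdet
  have h2 : γ < β + δ := upper hQ hQ2 hR hR2 hβ hδ heq hirr hv₂ hPv₂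
  linarith


theorem stmt_3 (P Q R : Matrix (Fin 2) (Fin 2) ℂ)
    (hP : P.IsHermitian) (hP2 : P * P = P) (hPr : P.rank = 1)
    (hQ : Q.IsHermitian) (hQ2 : Q * Q = Q) (hQr : Q.rank = 1)
    (hR : R.IsHermitian) (hR2 : R * R = R) (hRr : R.rank = 1)
    (α β δ γ : ℝ) (hα : 0 < α) (hβ : 0 < β) (hδ : 0 < δ) (hγ : 0 < γ)
    (heq : (α : ℂ) • P + (β : ℂ) • Q + (δ : ℂ) • R = (γ : ℂ) • (1 : Matrix (Fin 2) (Fin 2) ℂ))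
    (hirr : ∀ W : Submodule ℂ (Fin 2 → ℂ),
      (∀ x ∈ W, P.mulVec x ∈ W) → (∀ x ∈ W, Q.mulVec x ∈ W) →
      (∀ x ∈ W, R.mulVec x ∈ W) → W = ⊥ ∨ W = ⊤) :
    δ + β > α ∧ α + β > δ ∧ δ + α > β := by
  have h1 : β + δ > α := aux P Q R hP hP2 hPr hQ hQ2 hR hR2 α β δ γ hβ hδ heq hirr
  have h2 : α + δ > β := aux Q P R hQ hQ2 hQr hP hP2 hR hR2 β α δ γ hα hδ
    (by rw [← heq]; abel) (fun W a b c => hirr W b a c)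
  have h3 : β + α > δ := aux R Q P hR hR2 hRr hQ hQ2 hP hP2 δ β α γ hβ hα
    (by rw [← heq]; abel) (fun W a b c => hirr W c b a)
  exact ⟨by linarith, by linarith, by linarith⟩
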